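/- Let (X,d) be a metric space, v : X → ℝ bounded below, G : X → [0,∞) Borel, and let η : [0,∞) → X be a gradient-flow curve of v with respect to G. Set ℓ := v + (1/2)G². Then the integral ∫_0^∞ e^{−t} ( (1/2) G(η(t))² + ℓ(η(t)) ) dt is finite and equals v(η(0)); equivalently, ∫_0^∞ e^{−t} ( G(η(t))² + v(η(t)) ) dt = v(η(0)). -/

import Mathlib

open MeasureTheory Set Filter
open scoped ENNReal

noncomputable section

/-- `m` is a (nonnegative, integrable) upper speed of the curve `γ` on `[a,b]`:
`dist (γ s) (γ t) ≤ ∫_s^t m` for all `a ≤ s ≤ t ≤ b`. -/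
def IsUpperSpeedOn {X : Type*} [MetricSpace X] (γ : ℝ → X) (m : ℝ → ℝ) (a b : ℝ) : Prop :=
  (∀ r ∈ Set.Icc a b, 0 ≤ m r) ∧
  IntervalIntegrable m MeasureTheory.volume a b ∧
  ∀ s t : ℝ, a ≤ s → s ≤ t → t ≤ b → dist (γ s) (γ t) ≤ ∫ r in s..t, m r

/-- The Finsler cost `d_G(x,y)`: the infimum of `∫_0^1 m(t) G(γ(t)) dt` over continuous
curves `γ : [0,1] → X` joining `x` to `y` with integrable upper speed `m`;
`+∞` if no admissible pair exists. -/
def finslerCost {X : Type*} [MetricSpace X] (G : X → ℝ) (x y : X) : ℝ≥0∞ :=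
  sInf { c : ℝ≥0∞ | ∃ γ : ℝ → X, ∃ m : ℝ → ℝ,
    ContinuousOn γ (Set.Icc 0 1) ∧ γ 0 = x ∧ γ 1 = y ∧
    IsUpperSpeedOn γ m 0 1 ∧
    c = ∫⁻ t in Set.Ioc (0:ℝ) 1, ENNReal.ofReal (m t * G (γ t)) }

/-- The action `E_G^T(x,y)`: the infimum of `∫_0^T ((1/2) m(t)² + (1/2) G(γ(t))²) dt` over
continuous curves `γ : [0,T] → X` joining `x` to `y` with square-integrable upper speed `m`;
`+∞` if no admissible pair exists. -/
def actionCost {X : Type*} [MetricSpace X] (G : X → ℝ) (T : ℝ) (x y : X) : ℝ≥0∞ :=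
  sInf { c : ℝ≥0∞ | ∃ γ : ℝ → X, ∃ m : ℝ → ℝ,
    ContinuousOn γ (Set.Icc 0 T) ∧ γ 0 = x ∧ γ T = y ∧
    IsUpperSpeedOn γ m 0 T ∧
    IntervalIntegrable (fun t => (m t) ^ 2) MeasureTheory.volume 0 T ∧
    c = ∫⁻ t in Set.Ioc (0:ℝ) T,
          ENNReal.ofReal ((1/2) * (m t) ^ 2 + (1/2) * (G (γ t)) ^ 2) }

/-- `G` is a strong upper gradient of `v`: along every continuous curve with integrable
upper speed `m`, `|v(γ t) − v(γ s)| ≤ ∫_s^t G(γ r) m(r) dr` (the right-hand side taken as a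
possibly infinite nonnegative integral). -/
def IsStrongUpperGradient {X : Type*} [MetricSpace X] (G v : X → ℝ) : Prop :=
  ∀ (a b : ℝ) (γ : ℝ → X) (m : ℝ → ℝ),
    ContinuousOn γ (Set.Icc a b) → IsUpperSpeedOn γ m a b →
    ∀ s t : ℝ, a ≤ s → s ≤ t → t ≤ b →
      ENNReal.ofReal |v (γ t) - v (γ s)| ≤
        ∫⁻ r in Set.Ioc s t, ENNReal.ofReal (G (γ r) * m r)

/-- A gradient-flow curve (curve of maximal slope in energy-dissipation form) of `v` with
respect to `G`: `η` is continuous on `[0,∞)`, `G∘η` is square-integrable on compacts and is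
an upper speed of `η` on every compact subinterval of `[0,∞)`, and the energy-dissipation
equality `v(η s) − v(η t) = ∫_s^t G(η r)² dr` holds for `0 ≤ s ≤ t`. -/
def IsGradientFlowCurve {X : Type*} [MetricSpace X] (v G : X → ℝ) (η : ℝ → X) : Prop :=
  ContinuousOn η (Set.Ici 0) ∧
  (∀ b : ℝ, 0 ≤ b → IntervalIntegrable (fun t => (G (η t)) ^ 2) MeasureTheory.volume 0 b) ∧
  (∀ a b : ℝ, 0 ≤ a → a ≤ b → IsUpperSpeedOn η (fun t => G (η t)) a b) ∧
  ∀ s t : ℝ, 0 ≤ s → s ≤ t → v (η s) - v (η t) = ∫ r in s..t, (G (η r)) ^ 2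

lemma gf_aux (f g : ℝ → ℝ) (B : ℝ)
    (hg0 : ∀ t, 0 ≤ g t)
    (hg_meas : AEMeasurable g (volume.restrict (Ioi (0:ℝ))))
    (hgInt : ∀ b : ℝ, 0 ≤ b → IntegrableOn g (Ioc 0 b) volume)
    (hfB : ∀ t : ℝ, 0 ≤ t → B ≤ f t)
    (hEDE0 : ∀ t : ℝ, 0 ≤ t → f 0 - f t = ∫ r in Ioc 0 t, g r)
    (hmono : ∀ s t : ℝ, 0 ≤ s → s ≤ t → f t ≤ f s) :
    IntegrableOn (fun t => Real.exp (-t) * (g t + f t)) (Ioi 0) volume ∧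
    ∫ t in Ioi (0:ℝ), Real.exp (-t) * (g t + f t) = f 0 := by
  -- measurable antitone extension of f
  set fb : ℝ → ℝ := fun t => f (max t 0) with hfbdef
  have hfb_anti : Antitone fb := fun s t hst =>
    hmono _ _ (le_max_right s 0) (max_le_max hst le_rfl)
  have hfb_meas : Measurable fb := hfb_anti.measurable
  have hfb_le : ∀ t, fb t ≤ f 0 := fun t => hmono 0 _ le_rfl (le_max_right t 0)
  have hfb_ge : ∀ t, B ≤ fb t := fun t => hfB _ (le_max_right t 0)
  have hfb_eq : ∀ t : ℝ, 0 < t → fb t = f t := fun t ht => by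
    simp only [hfbdef, max_eq_left ht.le]
  have hBf0 : B ≤ f 0 := hfB 0 le_rfl
  -- measurable ENNReal representative of g on Ioi 0
  obtain ⟨h, hh_meas, hh_ae⟩ :
      AEMeasurable (fun r => ENNReal.ofReal (g r)) (volume.restrict (Ioi (0:ℝ))) :=
    ENNReal.measurable_ofReal.comp_aemeasurable hg_meas
  -- lintegral over Ioc 0 b
  have hIocE : ∀ b : ℝ, 0 ≤ b → ∫⁻ r in Ioc (0:ℝ) b, h r = ENNReal.ofReal (f 0 - f b) := by
    intro b hb
    have h1 : (∫⁻ r in Ioc (0:ℝ) b, h r) = ∫⁻ r in Ioc (0:ℝ) b, ENNReal.ofReal (g r) :=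
      lintegral_congr_ae
        (hh_ae.symm.filter_mono (ae_mono (Measure.restrict_mono Ioc_subset_Ioi_self le_rfl)))
    rw [h1, ← MeasureTheory.ofReal_integral_eq_lintegral_ofReal (hgInt b hb)
        (ae_of_all _ fun r => hg0 r), hEDE0 b hb]
  -- total lintegral is finite
  have hIoiE : ∫⁻ r in Ioi (0:ℝ), h r ≤ ENNReal.ofReal (f 0 - B) := by
    have hmonoInd : Monotone (fun n : ℕ => (Ioc (0:ℝ) (n:ℝ)).indicator h) := by
      intro m n hmn
      exact indicator_le_indicator_of_subset
        (Ioc_subset_Ioc_right (by exact_mod_cast hmn)) (fun _ => zero_le)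
    have hptw : ∀ x : ℝ, (⨆ n : ℕ, (Ioc (0:ℝ) (n:ℝ)).indicator h x) = (Ioi 0).indicator h x := by
      intro x
      by_cases hx : 0 < x
      · apply le_antisymm
        · exact iSup_le fun n =>
            indicator_le_indicator_of_subset Ioc_subset_Ioi_self (fun _ => zero_le) x
        · have hxmem : x ∈ Ioc (0:ℝ) ((⌈x⌉₊ : ℕ) : ℝ) := ⟨hx, Nat.le_ceil x⟩
          rw [indicator_of_mem (mem_Ioi.mpr hx) h]
          calc h x = (Ioc (0:ℝ) ((⌈x⌉₊ : ℕ) : ℝ)).indicator h x := (indicator_of_mem hxmem h).symm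
            _ ≤ ⨆ n : ℕ, (Ioc (0:ℝ) (n:ℝ)).indicator h x := le_iSup (fun n : ℕ => (Ioc (0:ℝ) (n:ℝ)).indicator h x) (⌈x⌉₊)
      · simp [indicator_apply, mem_Ioc, mem_Ioi, hx]
    calc ∫⁻ r in Ioi (0:ℝ), h r
        = ∫⁻ r, (Ioi (0:ℝ)).indicator h r := (lintegral_indicator measurableSet_Ioi h).symm
      _ = ∫⁻ r, ⨆ n : ℕ, (Ioc (0:ℝ) (n:ℝ)).indicator h r := by
          exact lintegral_congr fun x => (hptw x).symm
      _ = ⨆ n : ℕ, ∫⁻ r, (Ioc (0:ℝ) (n:ℝ)).indicator h r :=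
          lintegral_iSup (fun n => hh_meas.indicator measurableSet_Ioc) hmonoInd
      _ ≤ ENNReal.ofReal (f 0 - B) := by
          refine iSup_le fun n => ?_
          rw [lintegral_indicator measurableSet_Ioc h, hIocE n (Nat.cast_nonneg n)]
          exact ENNReal.ofReal_le_ofReal (by have := hfB (n:ℝ) (Nat.cast_nonneg n); linarith)
  have hIoi_lt : ∫⁻ r in Ioi (0:ℝ), h r < ∞ := lt_of_le_of_lt hIoiE ENNReal.ofReal_lt_top
  -- exponential kernel
  set E : ℝ → ℝ≥0∞ := fun t => ENNReal.ofReal (Real.exp (-t)) with hEdef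
  have hE_meas : Measurable E := ENNReal.measurable_ofReal.comp (Real.measurable_exp.comp measurable_neg)
  have hexp_int : ∀ r : ℝ, IntegrableOn (fun t => Real.exp (-t)) (Ioi r) volume := by
    intro r
    have := exp_neg_integrableOn_Ioi r (by norm_num : (0:ℝ) < 1)
    simpa using this
  have hexpIci : ∀ r : ℝ, ∫⁻ t in Ici r, E t = ENNReal.ofReal (Real.exp (-r)) := by
    intro r
    rw [← MeasureTheory.restrict_Ioi_eq_restrict_Ici,
      ← MeasureTheory.ofReal_integral_eq_lintegral_ofReal (hexp_int r)
        (ae_of_all _ fun t => (Real.exp_pos _).le), integral_exp_neg_Ioi]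
  -- Tonelli
  set H : ℝ → ℝ≥0∞ := fun t => ∫⁻ r in Ioc (0:ℝ) t, h r with hHdef
  have tonelli : ∫⁻ t in Ioi (0:ℝ), E t * H t = ∫⁻ r in Ioi (0:ℝ), E r * h r := by
    have step1 : ∀ t ∈ Ioi (0:ℝ),
        E t * H t = ∫⁻ r in Ioi (0:ℝ), E t * (Iic t).indicator h r := by
      intro t _
      rw [lintegral_const_mul _ (hh_meas.indicator measurableSet_Iic)]
      congr 1
      rw [lintegral_indicator measurableSet_Iic h,
        MeasureTheory.Measure.restrict_restrict measurableSet_Iic, Set.inter_comm,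
        Set.Ioi_inter_Iic]
    have hker : Measurable (Function.uncurry fun t r : ℝ => E t * (Iic t).indicator h r) := by
      have hset : MeasurableSet {q : ℝ × ℝ | q.2 ≤ q.1} :=
        measurableSet_le measurable_snd measurable_fst
      have h1 : (Function.uncurry fun t r : ℝ => E t * (Iic t).indicator h r)
          = fun p : ℝ × ℝ => E p.1 * ({q : ℝ × ℝ | q.2 ≤ q.1}.indicator (fun q => h q.2) p) := by
        ext p
        by_cases hp : p.2 ≤ p.1 <;>
          simp [Function.uncurry, indicator_apply, hp]
      rw [h1]
      exact (hE_meas.comp measurable_fst).mul ((hh_meas.comp measurable_snd).indicator hset)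
    have step2 : ∀ r ∈ Ioi (0:ℝ),
        (∫⁻ t in Ioi (0:ℝ), E t * (Iic t).indicator h r) = E r * h r := by
      intro r hr
      have hpt : ∀ t : ℝ, E t * (Iic t).indicator h r
          = (Ici r).indicator (fun t => E t * h r) t := by
        intro t
        by_cases hrt : r ≤ t <;> simp [indicator_apply, hrt]
      calc (∫⁻ t in Ioi (0:ℝ), E t * (Iic t).indicator h r)
          = ∫⁻ t in Ioi (0:ℝ), (Ici r).indicator (fun t => E t * h r) t :=
            lintegral_congr fun t => hpt t
        _ = ∫⁻ t in Ici r ∩ Ioi (0:ℝ), E t * h r := by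
            rw [lintegral_indicator measurableSet_Ici,
              MeasureTheory.Measure.restrict_restrict measurableSet_Ici]
        _ = ∫⁻ t in Ici r, E t * h r := by
            have heq : Ici r ∩ Ioi (0:ℝ) = Ici r := by
              rw [Set.inter_eq_left]
              exact fun x hx => mem_Ioi.mpr (lt_of_lt_of_le (mem_Ioi.mp hr) (mem_Ici.mp hx))
            rw [heq]
        _ = (∫⁻ t in Ici r, E t) * h r := lintegral_mul_const _ hE_meas
        _ = E r * h r := by rw [hexpIci r]
    calc ∫⁻ t in Ioi (0:ℝ), E t * H t
        = ∫⁻ t in Ioi (0:ℝ), ∫⁻ r in Ioi (0:ℝ), E t * (Iic t).indicator h r :=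
          setLIntegral_congr_fun measurableSet_Ioi (fun t ht => step1 t ht)
      _ = ∫⁻ r in Ioi (0:ℝ), ∫⁻ t in Ioi (0:ℝ), E t * (Iic t).indicator h r :=
          lintegral_lintegral_swap hker.aemeasurable
      _ = ∫⁻ r in Ioi (0:ℝ), E r * h r :=
          setLIntegral_congr_fun measurableSet_Ioi (fun r hr => step2 r hr)
  -- finiteness of the discounted lintegral
  have hJ_le : (∫⁻ r in Ioi (0:ℝ), E r * h r) ≤ ENNReal.ofReal (f 0 - B) := by
    refine le_trans (lintegral_mono_ae ?_) hIoiE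
    refine (ae_restrict_iff' measurableSet_Ioi).mpr (ae_of_all _ fun r hr => ?_)
    have hE1 : E r ≤ 1 := by
      simp only [hEdef]
      exact ENNReal.ofReal_le_one.mpr (Real.exp_le_one_iff.mpr (by linarith [mem_Ioi.mp hr]))
    calc E r * h r ≤ 1 * h r := mul_le_mul_left hE1 _
      _ = h r := one_mul _
  have hJ_lt : (∫⁻ r in Ioi (0:ℝ), E r * h r) < ∞ :=
    lt_of_le_of_lt hJ_le ENNReal.ofReal_lt_top
  -- lintegral identifications
  have hlin1 : ∫⁻ t in Ioi (0:ℝ), ENNReal.ofReal (Real.exp (-t) * g t)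
      = ∫⁻ r in Ioi (0:ℝ), E r * h r := by
    refine lintegral_congr_ae ?_
    filter_upwards [hh_ae] with r hr
    rw [ENNReal.ofReal_mul (Real.exp_pos _).le, ← hr]
  have hlin2 : ∫⁻ t in Ioi (0:ℝ), ENNReal.ofReal (Real.exp (-t) * (f 0 - fb t))
      = ∫⁻ r in Ioi (0:ℝ), E r * h r := by
    rw [← tonelli]
    refine setLIntegral_congr_fun measurableSet_Ioi (fun t ht => ?_)
    rw [ENNReal.ofReal_mul (Real.exp_pos _).le]
    congr 1
    rw [hfb_eq t (mem_Ioi.mp ht)]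
    simp only [hHdef]
    exact (hIocE t (le_of_lt (mem_Ioi.mp ht))).symm
  -- integrability
  have hnn1 : 0 ≤ᵐ[volume.restrict (Ioi (0:ℝ))] fun t => Real.exp (-t) * g t :=
    ae_of_all _ fun t => mul_nonneg (Real.exp_pos _).le (hg0 t)
  have hnn2 : 0 ≤ᵐ[volume.restrict (Ioi (0:ℝ))] fun t => Real.exp (-t) * (f 0 - fb t) :=
    ae_of_all _ fun t => mul_nonneg (Real.exp_pos _).le (by linarith [hfb_le t])
  have hmeas1 : AEStronglyMeasurable (fun t => Real.exp (-t) * g t)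
      (volume.restrict (Ioi (0:ℝ))) :=
    ((Real.measurable_exp.comp measurable_neg).aemeasurable.mul hg_meas).aestronglyMeasurable
  have hmeas2 : AEStronglyMeasurable (fun t => Real.exp (-t) * (f 0 - fb t))
      (volume.restrict (Ioi (0:ℝ))) :=
    ((Real.measurable_exp.comp measurable_neg).mul
      (measurable_const.sub hfb_meas)).aestronglyMeasurable
  have hint1 : IntegrableOn (fun t => Real.exp (-t) * g t) (Ioi 0) volume := by
    refine ⟨hmeas1, ?_⟩
    rw [hasFiniteIntegral_iff_ofReal hnn1, hlin1]
    exact hJ_lt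
  have hint2 : IntegrableOn (fun t => Real.exp (-t) * (f 0 - fb t)) (Ioi 0) volume := by
    refine ⟨hmeas2, ?_⟩
    rw [hasFiniteIntegral_iff_ofReal hnn2, hlin2]
    exact hJ_lt
  -- equality of the two real integrals
  have heqint : ∫ t in Ioi (0:ℝ), Real.exp (-t) * (f 0 - fb t)
      = ∫ t in Ioi (0:ℝ), Real.exp (-t) * g t := by
    rw [integral_eq_lintegral_of_nonneg_ae hnn2 hmeas2,
      integral_eq_lintegral_of_nonneg_ae hnn1 hmeas1, hlin1, hlin2]
  -- assemble
  have hexp0 : IntegrableOn (fun t => Real.exp (-t)) (Ioi 0) volume := hexp_int 0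
  have hφ_int : IntegrableOn
      (fun t => Real.exp (-t) * g t + (f 0 * Real.exp (-t) - Real.exp (-t) * (f 0 - fb t)))
      (Ioi 0) volume :=
    hint1.add ((hexp0.const_mul (f 0)).sub hint2)
  have hae : (fun t => Real.exp (-t) * g t
        + (f 0 * Real.exp (-t) - Real.exp (-t) * (f 0 - fb t)))
      =ᵐ[volume.restrict (Ioi (0:ℝ))] fun t => Real.exp (-t) * (g t + f t) := by
    refine (ae_restrict_iff' measurableSet_Ioi).mpr (ae_of_all _ fun t ht => ?_)
    show Real.exp (-t) * g t + (f 0 * Real.exp (-t) - Real.exp (-t) * (f 0 - fb t))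
        = Real.exp (-t) * (g t + f t)
    rw [hfb_eq t (mem_Ioi.mp ht)]
    ring
  constructor
  · exact (integrable_congr hae).mp hφ_int
  · have e1 : ∫ t in Ioi (0:ℝ),
        (Real.exp (-t) * g t + (f 0 * Real.exp (-t) - Real.exp (-t) * (f 0 - fb t)))
        = (∫ t in Ioi (0:ℝ), Real.exp (-t) * g t)
          + ∫ t in Ioi (0:ℝ), (f 0 * Real.exp (-t) - Real.exp (-t) * (f 0 - fb t)) :=
      integral_add hint1 ((hexp0.const_mul (f 0)).sub hint2)
    have e2 : ∫ t in Ioi (0:ℝ), (f 0 * Real.exp (-t) - Real.exp (-t) * (f 0 - fb t))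
        = (∫ t in Ioi (0:ℝ), f 0 * Real.exp (-t))
          - ∫ t in Ioi (0:ℝ), Real.exp (-t) * (f 0 - fb t) :=
      integral_sub (hexp0.const_mul (f 0)) hint2
    have e3 : ∫ t in Ioi (0:ℝ), f 0 * Real.exp (-t)
        = f 0 * ∫ t in Ioi (0:ℝ), Real.exp (-t) := integral_const_mul _ _
    rw [← integral_congr_ae hae, e1, e2, e3, integral_exp_neg_Ioi_zero, heqint]
    ring

/-- (Gradient flows attain the discounted value.) Let `v` be bounded below
(with lower bound `B`), `G : X → [0,∞)` Borel, and `η` a gradient-flow curve of `v` with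
respect to `G`. With running cost `ℓ = v + (1/2)G²`, the discounted cost integrand
`e^{−t}((1/2)G(η t)² + ℓ(η t)) = e^{−t}(G(η t)² + v(η t))` is integrable on `(0,∞)` and its
integral equals `v (η 0)`. -/
theorem gradient_flow_attains_value {X : Type*} [MetricSpace X]
    [MeasurableSpace X] [BorelSpace X]
    (v G : X → ℝ) (hG0 : ∀ x, 0 ≤ G x) (hGmeas : Measurable G)
    (B : ℝ) (hB : ∀ x : X, B ≤ v x)
    (η : ℝ → X) (hη : IsGradientFlowCurve v G η) :
    MeasureTheory.IntegrableOn
      (fun t => Real.exp (-t) * ((G (η t)) ^ 2 + v (η t))) (Set.Ioi 0)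
      MeasureTheory.volume ∧
    ∫ t in Set.Ioi (0:ℝ), Real.exp (-t) * ((G (η t)) ^ 2 + v (η t)) = v (η 0) := by
  obtain ⟨hcont, hint, -, hEDE⟩ := hη
  have hη_meas : AEMeasurable η (volume.restrict (Ioi (0:ℝ))) :=
    (hcont.aemeasurable measurableSet_Ici).mono_measure
      (Measure.restrict_mono Ioi_subset_Ici_self le_rfl)
  have hg_meas : AEMeasurable (fun t => (G (η t)) ^ 2) (volume.restrict (Ioi (0:ℝ))) :=
    (hGmeas.comp_aemeasurable hη_meas).pow_const 2
  have hgInt : ∀ b : ℝ, 0 ≤ b → IntegrableOn (fun t => (G (η t)) ^ 2) (Ioc 0 b) volume :=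
    fun b hb => (intervalIntegrable_iff_integrableOn_Ioc_of_le hb).mp (hint b hb)
  have hmono : ∀ s t : ℝ, 0 ≤ s → s ≤ t → v (η t) ≤ v (η s) := by
    intro s t hs hst
    have h1 := hEDE s t hs hst
    have h2 : 0 ≤ ∫ r in s..t, (G (η r)) ^ 2 :=
      intervalIntegral.integral_nonneg hst (fun u _ => sq_nonneg _)
    linarith
  have hEDE0 : ∀ t : ℝ, 0 ≤ t → v (η 0) - v (η t) = ∫ r in Ioc 0 t, (G (η r)) ^ 2 := by
    intro t ht
    rw [← intervalIntegral.integral_of_le ht]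
    exact hEDE 0 t le_rfl ht
  exact gf_aux (fun t => v (η t)) (fun t => (G (η t)) ^ 2) B (fun t => sq_nonneg _)
    hg_meas hgInt (fun t _ => hB _) hEDE0 hmono
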